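/- Hypergeometric representation of the Bernstein coefficients: let 2 ≤ ℓ ≤ m and p = (p_0,…,p_ℓ) ∈ ℝ^{ℓ+1}. Then for all x ∈ ℝ, ∑_{j=0}^{ℓ} (p_j − j/ℓ) b_{j,ℓ}(x) = ∑_{i=0}^{m} ( E[p_{K_i}] − i/m ) b_{i,m}(x), where K_i ~ Hypergeometric(m, ℓ, i), i.e. P(K_i = j) = C(ℓ,j)C(m−ℓ,i−j)/C(m,i). -/

import Mathlib

/-- The Bernstein basis polynomial. -/
noncomputable def bern (n i : ℕ) (x : ℝ) : ℝ := (n.choose i : ℝ) * x^i * (1-x)^(n-i)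

lemma sum_bern (n : ℕ) (x : ℝ) : ∑ k ∈ Finset.range (n+1), bern n k x = 1 := by
  have h := add_pow x (1-x) n
  simp only [add_sub_cancel, one_pow] at h
  rw [h]
  exact Finset.sum_congr rfl fun k _ => by simp [bern]; ring

lemma sum_j_bern (n : ℕ) (x : ℝ) :
    ∑ k ∈ Finset.range (n+1), (k : ℝ) * bern n k x = n * x := by
  have h := bernsteinPolynomial.sum_smul ℝ n
  have h2 := congrArg (Polynomial.eval x) h
  simp only [Polynomial.eval_finset_sum, nsmul_eq_mul, Polynomial.eval_mul,
    Polynomial.eval_natCast, Polynomial.eval_smul, Polynomial.eval_X,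
    bernsteinPolynomial] at h2
  rw [← h2]
  exact Finset.sum_congr rfl fun k _ => by simp [bern]

/-- Degree elevation with hypergeometric weights. -/
lemma elevate (m ℓ j : ℕ) (hm : ℓ ≤ m) (hj : j ≤ ℓ) (x : ℝ) :
    ∑ i ∈ Finset.range (m+1),
      (if j ≤ i then (ℓ.choose j : ℝ) * ((m-ℓ).choose (i-j) : ℝ) / (m.choose i : ℝ) else 0)
        * bern m i x = bern ℓ j x := by
  have step1 : ∀ i ∈ Finset.range (m+1),
      (if j ≤ i then (ℓ.choose j : ℝ) * ((m-ℓ).choose (i-j) : ℝ) / (m.choose i : ℝ) else 0)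
        * bern m i x
      = (if j ≤ i then (ℓ.choose j : ℝ) * ((m-ℓ).choose (i-j) : ℝ) * x^i * (1-x)^(m-i) else 0) := by
    intro i hi
    have him : i ≤ m := Nat.lt_succ_iff.mp (Finset.mem_range.mp hi)
    have hc : (m.choose i : ℝ) ≠ 0 := by
      exact_mod_cast (Nat.choose_pos him).ne'
    split
    · unfold bern; field_simp
    · simp
  rw [Finset.sum_congr rfl step1, ← Finset.sum_filter]
  have hfil : (Finset.range (m+1)).filter (fun i => j ≤ i) = Finset.Ico j (m+1) := by
    ext i; simp [Finset.mem_filter, Finset.mem_Ico, and_comm]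
  rw [hfil, Finset.sum_Ico_eq_sum_range]
  have hjm : j ≤ m := hj.trans hm
  have hrange : m + 1 - j = (m - j) + 1 := by omega
  rw [hrange]
  have hsub : Finset.range (m - ℓ + 1) ⊆ Finset.range (m - j + 1) := by
    apply Finset.range_subset_range.mpr; omega
  rw [← Finset.sum_subset hsub]
  · have : ∀ k ∈ Finset.range (m - ℓ + 1),
        (ℓ.choose j : ℝ) * ((m-ℓ).choose (j+k-j) : ℝ) * x^(j+k) * (1-x)^(m-(j+k))
        = ((ℓ.choose j : ℝ) * x^j * (1-x)^(ℓ-j)) * (((m-ℓ).choose k : ℝ) * x^k * (1-x)^((m-ℓ)-k)) := by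
      intro k hk
      have hk' : k ≤ m - ℓ := Nat.lt_succ_iff.mp (Finset.mem_range.mp hk)
      have e1 : j + k - j = k := by omega
      have e2 : m - (j + k) = (m - ℓ - k) + (ℓ - j) := by omega
      rw [e1, e2, pow_add, pow_add]
      ring
    rw [Finset.sum_congr rfl this, ← Finset.mul_sum]
    have := sum_bern (m - ℓ) x
    unfold bern at this ⊢
    rw [this, mul_one]
  · intro k hk1 hk2
    have : m - ℓ < j + k - j := by
      simp [Finset.mem_range] at hk1 hk2; omega
    rw [Nat.choose_eq_zero_of_lt this]
    simp

/-- Hypergeometric representation of the Bernstein coefficients: the inner sum is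
`E[p_{K_i}]` for `K_i ~ Hypergeometric(m, ℓ, i)`. -/
theorem hypergeometric_bernstein_coefficients (m ℓ : ℕ) (hℓ : 2 ≤ ℓ) (hm : ℓ ≤ m)
    (p : ℕ → ℝ) (x : ℝ) :
    ∑ j ∈ Finset.range (ℓ+1), (p j - (j : ℝ)/(ℓ : ℝ)) * bern ℓ j x =
      ∑ i ∈ Finset.range (m+1),
        ((∑ j ∈ Finset.range (ℓ+1),
            (if j ≤ i then (ℓ.choose j : ℝ) * ((m-ℓ).choose (i-j) : ℝ) / (m.choose i : ℝ)
              else 0) * p j) - (i : ℝ)/(m : ℝ)) * bern m i x := by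
  have hℓ0 : (ℓ : ℝ) ≠ 0 := by positivity
  have hm0 : (m : ℝ) ≠ 0 := by
    have : 0 < m := lt_of_lt_of_le (by omega) hm
    positivity
  have lhs : ∑ j ∈ Finset.range (ℓ+1), (p j - (j : ℝ)/(ℓ : ℝ)) * bern ℓ j x
      = (∑ j ∈ Finset.range (ℓ+1), p j * bern ℓ j x) - x := by
    rw [Finset.sum_congr rfl (fun j _ => sub_mul (p j) _ (bern ℓ j x)), Finset.sum_sub_distrib]
    congr 1
    have h := sum_j_bern ℓ x
    rw [show (∑ j ∈ Finset.range (ℓ+1), (j:ℝ)/(ℓ:ℝ) * bern ℓ j x)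
        = (1/(ℓ:ℝ)) * ∑ j ∈ Finset.range (ℓ+1), (j:ℝ) * bern ℓ j x by
      rw [Finset.mul_sum]; exact Finset.sum_congr rfl fun j _ => by ring]
    rw [h]; field_simp
  have rhs : ∑ i ∈ Finset.range (m+1),
        ((∑ j ∈ Finset.range (ℓ+1),
            (if j ≤ i then (ℓ.choose j : ℝ) * ((m-ℓ).choose (i-j) : ℝ) / (m.choose i : ℝ)
              else 0) * p j) - (i : ℝ)/(m : ℝ)) * bern m i x
      = (∑ j ∈ Finset.range (ℓ+1), p j * bern ℓ j x) - x := by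
    rw [Finset.sum_congr rfl (fun i _ => sub_mul _ _ (bern m i x)), Finset.sum_sub_distrib]
    congr 1
    · rw [Finset.sum_congr rfl (fun i _ => Finset.sum_mul ..), Finset.sum_comm]
      apply Finset.sum_congr rfl
      intro j hj
      have hjℓ : j ≤ ℓ := Nat.lt_succ_iff.mp (Finset.mem_range.mp hj)
      rw [← elevate m ℓ j hm hjℓ x, Finset.mul_sum]
      exact Finset.sum_congr rfl fun i _ => by ring
    · have h := sum_j_bern m x
      rw [show (∑ i ∈ Finset.range (m+1), (i:ℝ)/(m:ℝ) * bern m i x)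
          = (1/(m:ℝ)) * ∑ i ∈ Finset.range (m+1), (i:ℝ) * bern m i x by
        rw [Finset.mul_sum]; exact Finset.sum_congr rfl fun i _ => by ring]
      rw [h]; field_simp
  rw [lhs, rhs]
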